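/- Let φ(t) be a nonnegative, non-increasing function on the closed interval [k₀, M], and assume there exist constants c, τ, δ > 0 such that (h−k)^τ · φ(h)^δ ≤ c·(M−k)^τ·(φ(k) − φ(h)) for all M > h > k ≥ k₀. Then φ(h) → 0 as h → M. -/

import Mathlib

theorem stmt2 (k₀ M c τ δ : ℝ) (φ : ℝ → ℝ)
    (hk₀ : 0 ≤ k₀) (hM : k₀ < M) (hc : 0 < c) (hτ : 0 < τ) (hδ : 0 < δ)
    (hnonneg : ∀ t ∈ Set.Icc k₀ M, 0 ≤ φ t)
    (hanti : AntitoneOn φ (Set.Icc k₀ M))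
    (hest : ∀ h k, k₀ ≤ k → k < h → h < M →
      (h - k) ^ τ * φ h ^ δ ≤ c * (M - k) ^ τ * (φ k - φ h)) :
    Filter.Tendsto φ (nhdsWithin M (Set.Ico k₀ M)) (nhds 0) := by
  have hsub : Set.Ioo k₀ M ⊆ Set.Icc k₀ M := Set.Ioo_subset_Icc_self
  have hIoo : (Set.Ioo k₀ M).Nonempty := ⟨(k₀ + M) / 2, by constructor <;> linarith⟩
  set L := sInf (φ '' Set.Ioo k₀ M) with hLdef
  have hbdd : BddBelow (φ '' Set.Ioo k₀ M) := by
    refine ⟨0, fun y hy => ?_⟩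
    obtain ⟨t, ht, rfl⟩ := hy
    exact hnonneg t (hsub ht)
  have hLφ : ∀ t ∈ Set.Ioo k₀ M, L ≤ φ t := fun t ht => csInf_le hbdd ⟨t, ht, rfl⟩
  have hL0 : 0 ≤ L := by
    refine le_csInf (hIoo.image φ) fun y hy => ?_
    obtain ⟨t, ht, rfl⟩ := hy
    exact hnonneg t (hsub ht)
  have htend : Filter.Tendsto φ (nhdsWithin M (Set.Iio M)) (nhds L) :=
    AntitoneOn.tendsto_nhdsWithin_Ioo_left hIoo (hanti.mono hsub) hbdd
  -- Step 1 : for every k in (k₀, M), L ^ δ ≤ c * (φ k - L)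
  have key : ∀ k ∈ Set.Ioo k₀ M, L ^ δ ≤ c * (φ k - L) := by
    intro k hk
    have hMk : 0 < M - k := by linarith [hk.2]
    have hMkτ : 0 < (M - k) ^ τ := Real.rpow_pos_of_pos hMk τ
    have hstep : (M - k) ^ τ * L ^ δ ≤ c * (M - k) ^ τ * (φ k - L) := by
      have hcont : Filter.Tendsto (fun h : ℝ => (h - k) ^ τ * L ^ δ)
          (nhdsWithin M (Set.Iio M)) (nhds ((M - k) ^ τ * L ^ δ)) := by
        have h1 : ContinuousAt (fun h : ℝ => (h - k) ^ τ * L ^ δ) M := by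
          have hbase : ContinuousAt (fun h : ℝ => h - k) M :=
            continuousAt_id.sub continuousAt_const
          exact (hbase.rpow_const (Or.inl (ne_of_gt hMk))).mul continuousAt_const
        exact h1.continuousWithinAt.tendsto
      refine le_of_tendsto hcont ?_
      filter_upwards [Ioo_mem_nhdsLT hk.2] with h hh
      have hhk : k < h := hh.1
      have hhM : h < M := hh.2
      have hhIoo : h ∈ Set.Ioo k₀ M := ⟨lt_trans hk.1 hhk, hhM⟩
      have hLh : L ≤ φ h := hLφ h hhIoo
      have hrpow : L ^ δ ≤ φ h ^ δ := Real.rpow_le_rpow hL0 hLh hδ.le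
      have hhkτ : 0 ≤ (h - k) ^ τ := (Real.rpow_pos_of_pos (by linarith) τ).le
      have h1 : (h - k) ^ τ * L ^ δ ≤ (h - k) ^ τ * φ h ^ δ :=
        mul_le_mul_of_nonneg_left hrpow hhkτ
      have h2 := hest h k hk.1.le hhk hhM
      have h3 : c * (M - k) ^ τ * (φ k - φ h) ≤ c * (M - k) ^ τ * (φ k - L) := by
        have : 0 ≤ c * (M - k) ^ τ := by positivity
        nlinarith
      linarith
    have := (mul_le_mul_iff_right₀ hMkτ).mp (by linarith [hstep] :
      (M - k) ^ τ * L ^ δ ≤ (M - k) ^ τ * (c * (φ k - L)))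
    linarith
  -- Step 2 : L ^ δ ≤ 0
  have hLδ : L ^ δ ≤ 0 := by
    have htend2 : Filter.Tendsto (fun k : ℝ => c * (φ k - L))
        (nhdsWithin M (Set.Iio M)) (nhds 0) := by
      have : Filter.Tendsto (fun k : ℝ => c * (φ k - L))
          (nhdsWithin M (Set.Iio M)) (nhds (c * (L - L))) :=
        Filter.Tendsto.mul tendsto_const_nhds (htend.sub tendsto_const_nhds)
      simpa using this
    refine ge_of_tendsto htend2 ?_
    filter_upwards [Ioo_mem_nhdsLT hM] with k hk
    exact key k hk
  have hLzero : L = 0 := by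
    by_contra hne
    have hLpos : 0 < L := lt_of_le_of_ne hL0 (Ne.symm hne)
    exact absurd hLδ (not_le.mpr (Real.rpow_pos_of_pos hLpos δ))
  rw [nhdsWithin_Ico_eq_nhdsLT hM]
  rw [hLzero] at htend
  exact htend
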